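/- arXiv:0712.3081 — 3 statements merged into one kernel-verified Lean document; each statement's English description precedes it below -/
import Mathlib

section
/- For 0 < e < 1, J_O(3,2) + (1−e²)^{−1/3} J_O(3,1) = 3(e²−1)/e⁴ + ((3−2e²)/e⁵)√(1−e²) arcsin(e), where J_O(k,r) = 2(1−e²)^{−(2(r+1)−3k)/6} ∫₀¹ (1−x²)^r x^{3(k−1)−2r}(1−e²x²)^{−k/2} dx. -/
open Real

theorem JO_combination (e : ℝ) (he : e ∈ Set.Ioo (0 : ℝ) 1) :
    (2 * (1 - e ^ 2) ^ ((1 : ℝ) / 2) *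
        ∫ x in (0 : ℝ)..1, (1 - x ^ 2) ^ 2 * x ^ 2 * (1 - e ^ 2 * x ^ 2) ^ (-(3 : ℝ) / 2))
      + (1 - e ^ 2) ^ (-(1 : ℝ) / 3) *
        (2 * (1 - e ^ 2) ^ ((5 : ℝ) / 6) *
          ∫ x in (0 : ℝ)..1, (1 - x ^ 2) * x ^ 4 * (1 - e ^ 2 * x ^ 2) ^ (-(3 : ℝ) / 2))
      = 3 * (e ^ 2 - 1) / e ^ 4
        + (3 - 2 * e ^ 2) / e ^ 5 * Real.sqrt (1 - e ^ 2) * Real.arcsin e := by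
  obtain ⟨he0, he1⟩ := he
  have he2 : (0:ℝ) < 1 - e ^ 2 := by nlinarith
  have hne : e ≠ 0 := ne_of_gt he0
  have hu : ∀ x ∈ Set.uIcc (0:ℝ) 1, (0:ℝ) < 1 - e ^ 2 * x ^ 2 := by
    intro x hx
    rw [Set.uIcc_of_le (by norm_num : (0:ℝ) ≤ 1)] at hx
    obtain ⟨h0, h1⟩ := hx
    have hx2 : x ^ 2 ≤ 1 := by nlinarith
    have hx3 : e ^ 2 * x ^ 2 ≤ e ^ 2 * 1 := mul_le_mul_of_nonneg_left hx2 (sq_nonneg e)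
    nlinarith
  have hcont : ∀ (g : ℝ → ℝ), ContinuousOn g (Set.uIcc 0 1) →
      IntervalIntegrable (fun x => g x * (1 - e ^ 2 * x ^ 2) ^ (-(3:ℝ)/2)) MeasureTheory.volume 0 1 := by
    intro g hg
    apply ContinuousOn.intervalIntegrable
    exact hg.mul (ContinuousOn.rpow_const (by fun_prop) (fun x hx => Or.inl (ne_of_gt (hu x hx))))
  have hint1 : IntervalIntegrable (fun x => (1 - x ^ 2) ^ 2 * x ^ 2 * (1 - e ^ 2 * x ^ 2) ^ (-(3:ℝ)/2)) MeasureTheory.volume 0 1 :=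
    hcont _ (by fun_prop)
  have hint2 : IntervalIntegrable (fun x => (1 - x ^ 2) * x ^ 4 * (1 - e ^ 2 * x ^ 2) ^ (-(3:ℝ)/2)) MeasureTheory.volume 0 1 :=
    hcont _ (by fun_prop)
  have hint3 : IntervalIntegrable (fun x => (x ^ 2 - x ^ 4) * (1 - e ^ 2 * x ^ 2) ^ (-(3:ℝ)/2)) MeasureTheory.volume 0 1 :=
    hcont _ (by fun_prop)
  set A : ℝ := (e ^ 2 - 1) / e ^ 4 with hA
  set B : ℝ := -1 / (2 * e ^ 4) with hB
  set C : ℝ := (3 - 2 * e ^ 2) / (2 * e ^ 5) with hC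
  set F : ℝ → ℝ := fun x => A * x / Real.sqrt (1 - e ^ 2 * x ^ 2)
      + B * x * Real.sqrt (1 - e ^ 2 * x ^ 2) + C * Real.arcsin (e * x) with hF
  have hderiv : ∀ x ∈ Set.uIcc (0:ℝ) 1,
      HasDerivAt F ((x ^ 2 - x ^ 4) * (1 - e ^ 2 * x ^ 2) ^ (-(3:ℝ)/2)) x := by
    intro x hx
    have hux : (0:ℝ) < 1 - e ^ 2 * x ^ 2 := hu x hx
    have hx01 : x ∈ Set.Icc (0:ℝ) 1 := by
      rwa [Set.uIcc_of_le (by norm_num : (0:ℝ) ≤ 1)] at hx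
    set s : ℝ := Real.sqrt (1 - e ^ 2 * x ^ 2) with hsdef
    have hs : 0 < s := Real.sqrt_pos.mpr hux
    have hs2 : s ^ 2 = 1 - e ^ 2 * x ^ 2 := Real.sq_sqrt hux.le
    have hbase : HasDerivAt (fun y : ℝ => 1 - e ^ 2 * y ^ 2) (-(2 * e ^ 2 * x)) x := by
      have := ((hasDerivAt_pow 2 x).const_mul (e ^ 2)).const_sub 1
      refine this.congr_deriv (Eq.symm ?_)
      push_cast
      ring
    have hders : HasDerivAt (fun y : ℝ => Real.sqrt (1 - e ^ 2 * y ^ 2))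
        (-(2 * e ^ 2 * x) / (2 * s)) x := hbase.sqrt (ne_of_gt hux)
    have hex1 : e * x ≠ 1 := by
      intro h; nlinarith [hx01.1, hx01.2]
    have hexm1 : e * x ≠ -1 := by
      intro h; nlinarith [hx01.1, hx01.2]
    have harc : HasDerivAt (fun y : ℝ => Real.arcsin (e * y))
        (1 / Real.sqrt (1 - (e * x) ^ 2) * e) x := by
      have h1 := Real.hasDerivAt_arcsin hexm1 hex1
      have h2 : HasDerivAt (fun y : ℝ => e * y) e x := by
        simpa using (hasDerivAt_id x).const_mul e
      exact h1.comp x h2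
    have hsq : Real.sqrt (1 - (e * x) ^ 2) = s := by
      rw [hsdef]; ring_nf
    rw [hsq] at harc
    have t1 : HasDerivAt (fun y : ℝ => A * y / Real.sqrt (1 - e ^ 2 * y ^ 2))
        ((A * 1 * s - A * x * (-(2 * e ^ 2 * x) / (2 * s))) / s ^ 2) x :=
      ((hasDerivAt_id x).const_mul A).div hders hs.ne'
    have t2 : HasDerivAt (fun y : ℝ => B * y * Real.sqrt (1 - e ^ 2 * y ^ 2))
        (B * 1 * s + B * x * (-(2 * e ^ 2 * x) / (2 * s))) x :=
      ((hasDerivAt_id x).const_mul B).mul hders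
    have t3 : HasDerivAt (fun y : ℝ => C * Real.arcsin (e * y))
        (C * (1 / s * e)) x := harc.const_mul C
    have tot := (t1.add t2).add t3
    have hre : (1 - e ^ 2 * x ^ 2) ^ (-(3:ℝ)/2) = ((1 - e ^ 2 * x ^ 2) * s)⁻¹ := by
      rw [show (-(3:ℝ)/2) = -(3/2 : ℝ) by norm_num, Real.rpow_neg hux.le,
        show ((3:ℝ)/2) = (1 : ℝ) + 1/2 by norm_num, Real.rpow_add hux,
        Real.rpow_one, ← Real.sqrt_eq_rpow]
    refine tot.congr_deriv (Eq.symm ?_)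
    rw [hre, ← hs2]
    simp only [hA, hB, hC]
    field_simp
    linear_combination (s ^ 2 - 2 * e ^ 2 * x ^ 2) * hs2
  have heval : (∫ x in (0:ℝ)..1, (x ^ 2 - x ^ 4) * (1 - e ^ 2 * x ^ 2) ^ (-(3:ℝ)/2)) = F 1 - F 0 :=
    intervalIntegral.integral_eq_sub_of_hasDerivAt hderiv hint3
  have hsum : (∫ x in (0:ℝ)..1, (1 - x ^ 2) ^ 2 * x ^ 2 * (1 - e ^ 2 * x ^ 2) ^ (-(3:ℝ)/2))
      + (∫ x in (0:ℝ)..1, (1 - x ^ 2) * x ^ 4 * (1 - e ^ 2 * x ^ 2) ^ (-(3:ℝ)/2))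
      = F 1 - F 0 := by
    rw [← heval, ← intervalIntegral.integral_add hint1 hint2]
    apply intervalIntegral.integral_congr
    intro x hx
    ring
  set s1 : ℝ := Real.sqrt (1 - e ^ 2) with hs1def
  have hs1 : 0 < s1 := Real.sqrt_pos.mpr he2
  have hs1sq : s1 ^ 2 = 1 - e ^ 2 := Real.sq_sqrt he2.le
  have hF0 : F 0 = 0 := by
    simp [hF]
  have hF1 : F 1 = A / s1 + B * s1 + C * Real.arcsin e := by
    rw [hF]
    norm_num
    rw [hs1def]
  have hrp1 : (1 - e ^ 2) ^ ((1:ℝ)/2) = s1 := by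
    rw [hs1def, Real.sqrt_eq_rpow]
  have hrp2 : (1 - e ^ 2) ^ (-(1:ℝ)/3) * (1 - e ^ 2) ^ ((5:ℝ)/6) = s1 := by
    rw [← Real.rpow_add he2, hs1def, Real.sqrt_eq_rpow]
    norm_num
  calc (2 * (1 - e ^ 2) ^ ((1 : ℝ) / 2) *
        ∫ x in (0 : ℝ)..1, (1 - x ^ 2) ^ 2 * x ^ 2 * (1 - e ^ 2 * x ^ 2) ^ (-(3 : ℝ) / 2))
      + (1 - e ^ 2) ^ (-(1 : ℝ) / 3) *
        (2 * (1 - e ^ 2) ^ ((5 : ℝ) / 6) *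
          ∫ x in (0 : ℝ)..1, (1 - x ^ 2) * x ^ 4 * (1 - e ^ 2 * x ^ 2) ^ (-(3 : ℝ) / 2))
      = 2 * s1 * ((∫ x in (0:ℝ)..1, (1 - x ^ 2) ^ 2 * x ^ 2 * (1 - e ^ 2 * x ^ 2) ^ (-(3:ℝ)/2))
          + (∫ x in (0:ℝ)..1, (1 - x ^ 2) * x ^ 4 * (1 - e ^ 2 * x ^ 2) ^ (-(3:ℝ)/2))) := by
        have hmul : ∀ t : ℝ, (1 - e ^ 2) ^ (-(1:ℝ)/3) * (2 * (1 - e ^ 2) ^ ((5:ℝ)/6) * t)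
            = 2 * s1 * t := by
          intro t; rw [← hrp2]; ring
        rw [hrp1, hmul]; ring
    _ = 2 * s1 * (F 1 - F 0) := by rw [hsum]
    _ = 3 * (e ^ 2 - 1) / e ^ 4 + (3 - 2 * e ^ 2) / e ^ 5 * s1 * Real.arcsin e := by
        rw [hF0, hF1]
        have expand : 2 * s1 * (A / s1 + B * s1 + C * Real.arcsin e - 0)
            = 2 * A + 2 * B * s1 ^ 2 + 2 * C * s1 * Real.arcsin e := by
          field_simp; ring
        rw [expand, hs1sq, hA, hB, hC]
        field_simp
        ring
end

section
/- The 2×2 real matrix M(e) = [[A₁, −A₂],[−A₂, A₁]] with A₁ = (8 − e⁴ − 4e²) T Ω² / (e⁴ (1−e²)^{1/3}) and A₂ = 8(1−e²)^{1/6} T Ω² / e⁴ is positive definite for every e ∈ (0,1), T > 0, Ω ≠ 0. -/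
open Matrix Real

lemma posDef_aux (a b : ℝ) (ha : 0 < a) (hab : b ^ 2 < a ^ 2) :
    Matrix.PosDef !![a, -b; -b, a] := by
  rw [Matrix.posDef_iff_dotProduct_mulVec]
  constructor
  · rw [Matrix.IsHermitian]
    ext i j
    fin_cases i <;> fin_cases j <;> simp [Matrix.conjTranspose, Matrix.vecHead, Matrix.vecTail]
  · intro x hx
    have h2 : x 0 ≠ 0 ∨ x 1 ≠ 0 := by
      by_contra h
      push_neg at h
      apply hx
      ext i; fin_cases i <;> simp [h.1, h.2]
    simp only [Matrix.mulVec, dotProduct, Fin.sum_univ_two, star, RCLike.star_def]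
    simp [Matrix.cons_val_zero, Matrix.cons_val_one]
    have hb : |b| < a := by
      have := sq_abs b
      nlinarith [abs_nonneg b]
    have hsq : 2 * |x 0 * x 1| ≤ (x 0)^2 + (x 1)^2 := by
      rw [abs_mul]
      nlinarith [sq_nonneg (|x 0| - |x 1|), sq_abs (x 0), sq_abs (x 1)]
    have habs : b * (x 0 * x 1) ≤ |b| * |x 0 * x 1| :=
      (le_abs_self _).trans_eq (abs_mul _ _)
    have hpos : 0 < (x 0)^2 + (x 1)^2 := by
      rcases h2 with h | h <;> positivity
    have key := mul_le_mul_of_nonneg_left hsq (abs_nonneg b)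
    nlinarith [mul_lt_mul_of_pos_right hb hpos, abs_nonneg (x 0 * x 1)]

theorem arnold_block_posDef (e T Ω : ℝ) (he : e ∈ Set.Ioo (0 : ℝ) 1) (hT : 0 < T)
    (hΩ : Ω ≠ 0) :
    Matrix.PosDef
      !![(8 - e ^ 4 - 4 * e ^ 2) * T * Ω ^ 2 / (e ^ 4 * (1 - e ^ 2) ^ ((1 : ℝ) / 3)),
         -(8 * (1 - e ^ 2) ^ ((1 : ℝ) / 6) * T * Ω ^ 2 / e ^ 4);
         -(8 * (1 - e ^ 2) ^ ((1 : ℝ) / 6) * T * Ω ^ 2 / e ^ 4),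
         (8 - e ^ 4 - 4 * e ^ 2) * T * Ω ^ 2 / (e ^ 4 * (1 - e ^ 2) ^ ((1 : ℝ) / 3))] := by
  obtain ⟨he0, he1⟩ := he
  have h1e : (0 : ℝ) < 1 - e ^ 2 := by nlinarith
  set u : ℝ := (1 - e ^ 2) ^ ((1 : ℝ) / 6) with hu_def
  have hu : 0 < u := Real.rpow_pos_of_pos h1e _
  have hu6 : u ^ 6 = 1 - e ^ 2 := by
    rw [hu_def, ← Real.rpow_natCast _ 6, ← Real.rpow_mul h1e.le]
    norm_num
  have h13 : (1 - e ^ 2) ^ ((1 : ℝ) / 3) = u ^ 2 := by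
    rw [hu_def, ← Real.rpow_natCast ((1 - e ^ 2) ^ ((1:ℝ)/6)) 2, ← Real.rpow_mul h1e.le]
    norm_num
  rw [h13]
  have hΩ2 : 0 < Ω ^ 2 := by positivity
  have hN : 0 < 8 - e ^ 4 - 4 * e ^ 2 := by nlinarith
  apply posDef_aux
  · positivity
  · rw [div_pow, div_pow, div_lt_div_iff₀ (by positivity) (by positivity)]
    have key : 64 * (1 - e ^ 2) < (8 - e ^ 4 - 4 * e ^ 2) ^ 2 := by nlinarith [pow_pos he0 6, pow_pos he0 8]
    have : 64 * u ^ 6 < (8 - e ^ 4 - 4 * e ^ 2) ^ 2 := by rw [hu6]; exact key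
    nlinarith [pow_pos hu 4, pow_pos he0 8, sq_nonneg (T * Ω ^ 2), pow_pos hT 2,
      mul_pos (mul_pos (pow_pos hu 4) (pow_pos he0 8)) (mul_pos (pow_pos hT 2) (pow_pos hΩ2 2))]
end

section
/- Define S₂(e) = (1/e⁵)[ (1−e²) e (3+4e²) − √(1−e²) (3+2e²−4e⁴) arcsin(e) ] for e ∈ (0,1). Then S₂ has a unique zero e₀ ∈ (0,1); moreover S₂(e) > 0 for e < e₀ and S₂(e) < 0 for e > e₀, and 0.9528 < e₀ < 0.9529. -/
open Real

noncomputable def S₂ (e : ℝ) : ℝ :=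
  (1 / e ^ 5) * ((1 - e ^ 2) * e * (3 + 4 * e ^ 2)
    - Real.sqrt (1 - e ^ 2) * (3 + 2 * e ^ 2 - 4 * e ^ 4) * Real.arcsin e)

/-! ### Taylor-series bounds for `sin` and `cos` on `[0, ∞)` -/

private lemma nonneg_of_deriv' (f f' : ℝ → ℝ) (hd : ∀ x, HasDerivAt f (f' x) x)
    (h0 : f 0 = 0) (hp : ∀ x, 0 ≤ x → 0 ≤ f' x) : ∀ x, 0 ≤ x → 0 ≤ f x := by
  intro x hx
  have hmono : MonotoneOn f (Set.Ici (0:ℝ)) := by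
    apply monotoneOn_of_deriv_nonneg (convex_Ici 0)
      (fun y _ => (hd y).continuousAt.continuousWithinAt)
      (fun y _ => (hd y).differentiableAt.differentiableWithinAt)
    intro y hy
    rw [(hd y).deriv]
    exact hp y (le_of_lt (by simpa using hy))
  have := hmono (Set.self_mem_Ici) hx hx
  rwa [h0] at this

private lemma sin_le_T1 : ∀ x : ℝ, 0 ≤ x → Real.sin x ≤ x := by
  intro x hx
  rcases eq_or_lt_of_le hx with h | h
  · simp [← h]
  · exact (Real.sin_lt h).le

private lemma cos_ge_T2 : ∀ x : ℝ, 0 ≤ x → 1 - x^2/2 ≤ Real.cos x := by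
  have := nonneg_of_deriv' (fun x => Real.cos x - (1 - x^2/2)) (fun x => x - Real.sin x)
    (fun x => by
      have h1 := (Real.hasDerivAt_cos x)
      have h2 : HasDerivAt (fun x : ℝ => 1 - x^2/2) (-x) x := by
        have := ((hasDerivAt_pow 2 x).div_const 2).const_sub 1
        simpa using this.congr_deriv (by ring)
      exact (h1.sub h2).congr_deriv (by ring))
    (by simp)
    (fun x hx => sub_nonneg.mpr (sin_le_T1 x hx))
  intro x hx
  linarith [this x hx]

private lemma sin_ge_T3 : ∀ x : ℝ, 0 ≤ x → x - x^3/6 ≤ Real.sin x := by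
  have := nonneg_of_deriv' (fun x => Real.sin x - (x - x^3/6))
    (fun x => Real.cos x - (1 - x^2/2))
    (fun x => by
      have h2 : HasDerivAt (fun x : ℝ => x - x^3/6) (1 - x^2/2) x := by
        have := (hasDerivAt_id x).sub ((hasDerivAt_pow 3 x).div_const 6)
        exact this.congr_deriv (by ring)
      exact ((Real.hasDerivAt_sin x).sub h2))
    (by simp)
    (fun x hx => sub_nonneg.mpr (cos_ge_T2 x hx))
  intro x hx
  linarith [this x hx]

private lemma cos_le_T4 : ∀ x : ℝ, 0 ≤ x → Real.cos x ≤ 1 - x^2/2 + x^4/24 := by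
  have := nonneg_of_deriv' (fun x => (1 - x^2/2 + x^4/24) - Real.cos x)
    (fun x => Real.sin x - (x - x^3/6))
    (fun x => by
      have h2 : HasDerivAt (fun x : ℝ => 1 - x^2/2 + x^4/24) (-(x - x^3/6)) x := by
        have := (((hasDerivAt_pow 2 x).div_const 2).const_sub 1).add
          ((hasDerivAt_pow 4 x).div_const 24)
        exact this.congr_deriv (by ring)
      have := h2.sub (Real.hasDerivAt_cos x)
      exact this.congr_deriv (by ring))
    (by norm_num)
    (fun x hx => sub_nonneg.mpr (sin_ge_T3 x hx))
  intro x hx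
  linarith [this x hx]

private lemma sin_le_T5 : ∀ x : ℝ, 0 ≤ x → Real.sin x ≤ x - x^3/6 + x^5/120 := by
  have := nonneg_of_deriv' (fun x => (x - x^3/6 + x^5/120) - Real.sin x)
    (fun x => (1 - x^2/2 + x^4/24) - Real.cos x)
    (fun x => by
      have h2 : HasDerivAt (fun x : ℝ => x - x^3/6 + x^5/120) (1 - x^2/2 + x^4/24) x := by
        have := ((hasDerivAt_id x).sub ((hasDerivAt_pow 3 x).div_const 6)).add
          ((hasDerivAt_pow 5 x).div_const 120)
        exact this.congr_deriv (by ring)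
      exact h2.sub (Real.hasDerivAt_sin x))
    (by norm_num)
    (fun x hx => sub_nonneg.mpr (cos_le_T4 x hx))
  intro x hx
  linarith [this x hx]

private lemma cos_ge_T6 : ∀ x : ℝ, 0 ≤ x → 1 - x^2/2 + x^4/24 - x^6/720 ≤ Real.cos x := by
  have := nonneg_of_deriv' (fun x => Real.cos x - (1 - x^2/2 + x^4/24 - x^6/720))
    (fun x => (x - x^3/6 + x^5/120) - Real.sin x)
    (fun x => by
      have h2 : HasDerivAt (fun x : ℝ => 1 - x^2/2 + x^4/24 - x^6/720)
          (-(x - x^3/6 + x^5/120)) x := by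
        have := ((((hasDerivAt_pow 2 x).div_const 2).const_sub 1).add
          ((hasDerivAt_pow 4 x).div_const 24)).sub ((hasDerivAt_pow 6 x).div_const 720)
        exact this.congr_deriv (by ring)
      have := (Real.hasDerivAt_cos x).sub h2
      exact this.congr_deriv (by ring))
    (by norm_num)
    (fun x hx => sub_nonneg.mpr (sin_le_T5 x hx))
  intro x hx
  linarith [this x hx]

private lemma sin_ge_T7 : ∀ x : ℝ, 0 ≤ x → x - x^3/6 + x^5/120 - x^7/5040 ≤ Real.sin x := by
  have := nonneg_of_deriv' (fun x => Real.sin x - (x - x^3/6 + x^5/120 - x^7/5040))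
    (fun x => Real.cos x - (1 - x^2/2 + x^4/24 - x^6/720))
    (fun x => by
      have h2 : HasDerivAt (fun x : ℝ => x - x^3/6 + x^5/120 - x^7/5040)
          (1 - x^2/2 + x^4/24 - x^6/720) x := by
        have := (((hasDerivAt_id x).sub ((hasDerivAt_pow 3 x).div_const 6)).add
          ((hasDerivAt_pow 5 x).div_const 120)).sub ((hasDerivAt_pow 7 x).div_const 5040)
        exact this.congr_deriv (by ring)
      exact (Real.hasDerivAt_sin x).sub h2)
    (by norm_num)
    (fun x hx => sub_nonneg.mpr (cos_ge_T6 x hx))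
  intro x hx
  linarith [this x hx]

private lemma cos_le_T8 : ∀ x : ℝ, 0 ≤ x →
    Real.cos x ≤ 1 - x^2/2 + x^4/24 - x^6/720 + x^8/40320 := by
  have := nonneg_of_deriv'
    (fun x => (1 - x^2/2 + x^4/24 - x^6/720 + x^8/40320) - Real.cos x)
    (fun x => Real.sin x - (x - x^3/6 + x^5/120 - x^7/5040))
    (fun x => by
      have h2 : HasDerivAt (fun x : ℝ => 1 - x^2/2 + x^4/24 - x^6/720 + x^8/40320)
          (-(x - x^3/6 + x^5/120 - x^7/5040)) x := by
        have := (((((hasDerivAt_pow 2 x).div_const 2).const_sub 1).add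
          ((hasDerivAt_pow 4 x).div_const 24)).sub ((hasDerivAt_pow 6 x).div_const 720)).add
          ((hasDerivAt_pow 8 x).div_const 40320)
        exact this.congr_deriv (by ring)
      have := h2.sub (Real.hasDerivAt_cos x)
      exact this.congr_deriv (by ring))
    (by norm_num)
    (fun x hx => sub_nonneg.mpr (sin_ge_T7 x hx))
  intro x hx
  linarith [this x hx]

private lemma sin_le_T9 : ∀ x : ℝ, 0 ≤ x →
    Real.sin x ≤ x - x^3/6 + x^5/120 - x^7/5040 + x^9/362880 := by
  have := nonneg_of_deriv'
    (fun x => (x - x^3/6 + x^5/120 - x^7/5040 + x^9/362880) - Real.sin x)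
    (fun x => (1 - x^2/2 + x^4/24 - x^6/720 + x^8/40320) - Real.cos x)
    (fun x => by
      have h2 : HasDerivAt (fun x : ℝ => x - x^3/6 + x^5/120 - x^7/5040 + x^9/362880)
          (1 - x^2/2 + x^4/24 - x^6/720 + x^8/40320) x := by
        have := ((((hasDerivAt_id x).sub ((hasDerivAt_pow 3 x).div_const 6)).add
          ((hasDerivAt_pow 5 x).div_const 120)).sub ((hasDerivAt_pow 7 x).div_const 5040)).add
          ((hasDerivAt_pow 9 x).div_const 362880)
        exact this.congr_deriv (by ring)
      exact h2.sub (Real.hasDerivAt_sin x))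
    (by norm_num)
    (fun x hx => sub_nonneg.mpr (cos_le_T8 x hx))
  intro x hx
  linarith [this x hx]

/-! ### Numeric `arcsin` bounds -/

private lemma arcsin_e1_lt : Real.arcsin 0.9528 < 1.2625 := by
  have hs : (0.9528 : ℝ) < Real.sin 1.2625 := by
    have := sin_ge_T7 1.2625 (by norm_num)
    nlinarith [this]
  have hpi : (1.2625 : ℝ) ≤ π/2 := by have := Real.pi_gt_d6; linarith
  calc Real.arcsin 0.9528 < Real.arcsin (Real.sin 1.2625) := by
        apply Real.strictMonoOn_arcsin _ _ hs
        · constructor <;> norm_num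
        · exact ⟨Real.neg_one_le_sin _, Real.sin_le_one _⟩
    _ = 1.2625 := Real.arcsin_sin (by have := Real.pi_gt_d6; linarith) hpi

private lemma arcsin_e2_gt : (1.26263 : ℝ) < Real.arcsin 0.9529 := by
  have hs : Real.sin 1.26263 < (0.9529 : ℝ) := by
    have := sin_le_T9 1.26263 (by norm_num)
    nlinarith [this]
  have hpi : (1.26263 : ℝ) ≤ π/2 := by have := Real.pi_gt_d6; linarith
  calc (1.26263 : ℝ) = Real.arcsin (Real.sin 1.26263) :=
        (Real.arcsin_sin (by have := Real.pi_gt_d6; linarith) hpi).symm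
    _ < Real.arcsin 0.9529 := by
        apply Real.strictMonoOn_arcsin _ _ hs
        · exact ⟨Real.neg_one_le_sin _, Real.sin_le_one _⟩
        · constructor <;> norm_num

/-! ### The auxiliary functions and their derivatives -/

noncomputable def psiS (e : ℝ) : ℝ :=
  4 * Real.arcsin e - e * (2 - e^2) / ((1 - e^2) * Real.sqrt (1 - e^2))

noncomputable def phiS (e : ℝ) : ℝ :=
  e * (1 - 3*e^2) / Real.sqrt (1 - e^2) - (1 - 4*e^2) * Real.arcsin e

noncomputable def fS (e : ℝ) : ℝ :=
  Real.sqrt (1 - e^2) * e * (3 + 4*e^2) - (3 + 2*e^2 - 4*e^4) * Real.arcsin e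

private lemma one_sub_sq_pos {e : ℝ} (he : e ∈ Set.Ioo (-1:ℝ) 1) : 0 < 1 - e^2 := by
  nlinarith [he.1, he.2]

private lemma sqrt_pos' {e : ℝ} (he : e ∈ Set.Ioo (-1:ℝ) 1) : 0 < Real.sqrt (1 - e^2) :=
  Real.sqrt_pos.mpr (one_sub_sq_pos he)

private lemma sq_sqrt' {e : ℝ} (he : e ∈ Set.Ioo (-1:ℝ) 1) :
    Real.sqrt (1 - e^2) ^ 2 = 1 - e^2 :=
  Real.sq_sqrt (one_sub_sq_pos he).le

private lemma hasDerivAt_sqrt_one_sub_sq {e : ℝ} (he : e ∈ Set.Ioo (-1:ℝ) 1) :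
    HasDerivAt (fun x : ℝ => Real.sqrt (1 - x^2)) (-e / Real.sqrt (1 - e^2)) e := by
  have hinner : HasDerivAt (fun x : ℝ => 1 - x^2) (-(2*e)) e := by
    have := (hasDerivAt_pow 2 e).const_sub 1
    exact this.congr_deriv (by ring)
  have := (Real.hasDerivAt_sqrt (one_sub_sq_pos he).ne').comp e hinner
  refine this.congr_deriv ?_
  field_simp

private lemma hasDerivAt_arcsin' {e : ℝ} (he : e ∈ Set.Ioo (-1:ℝ) 1) :
    HasDerivAt Real.arcsin (1 / Real.sqrt (1 - e^2)) e :=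
  Real.hasDerivAt_arcsin (by intro h; rw [h] at he; exact absurd he.1 (lt_irrefl _))
    (by intro h; rw [h] at he; exact absurd he.2 (lt_irrefl _))

private lemma hasDerivAt_psiS {e : ℝ} (he : e ∈ Set.Ioo (-1:ℝ) 1) :
    HasDerivAt psiS
      ((4*(1-e^2)^2 - (2+e^2)) / ((1-e^2)^2 * Real.sqrt (1-e^2))) e := by
  have hu := one_sub_sq_pos he
  have hs := sqrt_pos' he
  have hsq := sq_sqrt' he
  have hN : HasDerivAt (fun x : ℝ => x * (2 - x^2)) (2 - 3*e^2) e := by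
    have := (hasDerivAt_id e).mul ((hasDerivAt_pow 2 e).const_sub 2)
    exact this.congr_deriv (by simp only [id_eq]; push_cast; ring)
  have hD : HasDerivAt (fun x : ℝ => (1 - x^2) * Real.sqrt (1 - x^2))
      ((-(2*e)) * Real.sqrt (1-e^2) + (1-e^2) * (-e / Real.sqrt (1-e^2))) e := by
    have h1 : HasDerivAt (fun x : ℝ => 1 - x^2) (-(2*e)) e :=
      ((hasDerivAt_pow 2 e).const_sub 1).congr_deriv (by ring)
    exact h1.mul (hasDerivAt_sqrt_one_sub_sq he)
  have hDne : (1 - e^2) * Real.sqrt (1 - e^2) ≠ 0 := by positivity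
  have hq := hN.div hD hDne
  have harc := (hasDerivAt_arcsin' he).const_mul 4
  have := harc.sub hq
  refine this.congr_deriv ?_
  have hs0 : Real.sqrt (1-e^2) ≠ 0 := hs.ne'
  set s := Real.sqrt (1 - e^2) with hsdef
  rw [← hsq]
  field_simp
  linear_combination (3*e^2 - 2) * hsq

private lemma hasDerivAt_phiS {e : ℝ} (he : e ∈ Set.Ioo (-1:ℝ) 1) :
    HasDerivAt phiS (2 * e * psiS e) e := by
  have hu := one_sub_sq_pos he
  have hs := sqrt_pos' he
  have hsq := sq_sqrt' he
  have hN : HasDerivAt (fun x : ℝ => x * (1 - 3*x^2)) (1 - 9*e^2) e := by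
    have := (hasDerivAt_id e).mul (((hasDerivAt_pow 2 e).const_mul 3).const_sub 1)
    exact this.congr_deriv (by simp only [id_eq]; push_cast; ring)
  have hq := hN.div (hasDerivAt_sqrt_one_sub_sq he) hs.ne'
  have h2 : HasDerivAt (fun x : ℝ => (1 - 4*x^2) * Real.arcsin x)
      ((-(8*e)) * Real.arcsin e + (1 - 4*e^2) * (1 / Real.sqrt (1 - e^2))) e := by
    have h1 : HasDerivAt (fun x : ℝ => 1 - 4*x^2) (-(8*e)) e := by
      have := ((hasDerivAt_pow 2 e).const_mul 4).const_sub 1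
      exact this.congr_deriv (by push_cast; ring)
    exact h1.mul (hasDerivAt_arcsin' he)
  have := hq.sub h2
  refine this.congr_deriv ?_
  unfold psiS
  have hs0 : Real.sqrt (1-e^2) ≠ 0 := hs.ne'
  set s := Real.sqrt (1 - e^2) with hsdef
  rw [← hsq]
  field_simp
  linear_combination (-5*e^2) * hsq

private lemma hasDerivAt_fS {e : ℝ} (he : e ∈ Set.Ioo (-1:ℝ) 1) :
    HasDerivAt fS (4 * e * phiS e) e := by
  have hu := one_sub_sq_pos he
  have hs := sqrt_pos' he
  have hsq := sq_sqrt' he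
  have h1 : HasDerivAt (fun x : ℝ => Real.sqrt (1 - x^2) * x * (3 + 4*x^2))
      (((-e / Real.sqrt (1-e^2)) * e + Real.sqrt (1-e^2) * 1) * (3 + 4*e^2)
        + (Real.sqrt (1-e^2) * e) * (8*e)) e := by
    have ha : HasDerivAt (fun x : ℝ => Real.sqrt (1 - x^2) * x)
        ((-e / Real.sqrt (1-e^2)) * e + Real.sqrt (1-e^2) * 1) e :=
      (hasDerivAt_sqrt_one_sub_sq he).mul (hasDerivAt_id e)
    have hb : HasDerivAt (fun x : ℝ => 3 + 4*x^2) (8*e) e := by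
      have := ((hasDerivAt_pow 2 e).const_mul 4).const_add 3
      exact this.congr_deriv (by push_cast; ring)
    exact ha.mul hb
  have h2 : HasDerivAt (fun x : ℝ => (3 + 2*x^2 - 4*x^4) * Real.arcsin x)
      ((4*e - 16*e^3) * Real.arcsin e + (3 + 2*e^2 - 4*e^4) * (1 / Real.sqrt (1-e^2))) e := by
    have hc : HasDerivAt (fun x : ℝ => 3 + 2*x^2 - 4*x^4) (4*e - 16*e^3) e := by
      have := (((hasDerivAt_pow 2 e).const_mul 2).const_add 3).sub
        ((hasDerivAt_pow 4 e).const_mul 4)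
      exact this.congr_deriv (by push_cast; ring)
    exact hc.mul (hasDerivAt_arcsin' he)
  have := h1.sub h2
  refine this.congr_deriv ?_
  unfold phiS
  have hs0 : Real.sqrt (1-e^2) ≠ 0 := hs.ne'
  set s := Real.sqrt (1 - e^2) with hsdef
  field_simp
  linear_combination (12*e^2+3) * hsq

/-! ### Continuity and values at 0 -/

private lemma memIoo_of_Ico {e : ℝ} (he : e ∈ Set.Ico (0:ℝ) 1) : e ∈ Set.Ioo (-1:ℝ) 1 :=
  ⟨lt_of_lt_of_le (by norm_num) he.1, he.2⟩

private lemma contOn_sqrt : ContinuousOn (fun x : ℝ => Real.sqrt (1 - x^2)) (Set.Ico 0 1) :=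
  (Real.continuous_sqrt.comp (by continuity)).continuousOn

private lemma psiS_cont : ContinuousOn psiS (Set.Ico 0 1) := by
  unfold psiS
  apply ContinuousOn.sub (continuousOn_const.mul Real.continuous_arcsin.continuousOn)
  apply ContinuousOn.div (by fun_prop)
    (ContinuousOn.mul (by fun_prop) contOn_sqrt)
  intro x hx
  have h1 := one_sub_sq_pos (memIoo_of_Ico hx)
  have h2 := sqrt_pos' (memIoo_of_Ico hx)
  exact (mul_pos h1 h2).ne'

private lemma phiS_cont : ContinuousOn phiS (Set.Ico 0 1) := by
  unfold phiS
  apply ContinuousOn.sub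
  · apply ContinuousOn.div (by fun_prop) contOn_sqrt
    intro x hx
    exact (sqrt_pos' (memIoo_of_Ico hx)).ne'
  · exact ContinuousOn.mul (by fun_prop) Real.continuous_arcsin.continuousOn

private lemma fS_cont : ContinuousOn fS (Set.Ico 0 1) := by
  unfold fS
  apply ContinuousOn.sub
  · exact (contOn_sqrt.mul (by fun_prop)).mul (by fun_prop)
  · exact ContinuousOn.mul (by fun_prop) Real.continuous_arcsin.continuousOn

private lemma psiS_zero : psiS 0 = 0 := by simp [psiS]
private lemma phiS_zero : phiS 0 = 0 := by simp [phiS]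
private lemma fS_zero : fS 0 = 0 := by simp [fS]

/-! ### Sign-change propagation -/

private lemma step_lemma (F G : ℝ → ℝ) (c x : ℝ) (hc : c ∈ Set.Ioo (0:ℝ) 1)
    (hF0 : F 0 = 0)
    (hFcont : ContinuousOn F (Set.Ico 0 1))
    (hderiv : ∀ e ∈ Set.Ioo (0:ℝ) 1, HasDerivAt F (G e) e)
    (hGpos : ∀ e ∈ Set.Ioo 0 c, 0 < G e)
    (hGneg : ∀ e ∈ Set.Ioo c 1, G e < 0)
    (hx : x ∈ Set.Ioo c 1) (hFx : F x < 0) :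
    ∃ c' ∈ Set.Ioo c x, F c' = 0 ∧ (∀ e ∈ Set.Ioo 0 c', 0 < F e) ∧
      (∀ e ∈ Set.Ioo c' 1, F e < 0) := by
  have hc0 : (0:ℝ) < c := hc.1
  have hc1 : c < 1 := hc.2
  have hmono : StrictMonoOn F (Set.Icc 0 c) := by
    apply strictMonoOn_of_deriv_pos (convex_Icc 0 c)
      (hFcont.mono (Set.Icc_subset_Ico_right hc1))
    intro y hy
    rw [interior_Icc] at hy
    rw [(hderiv y ⟨hy.1, hy.2.trans hc1⟩).deriv]
    exact hGpos y hy
  have hanti : StrictAntiOn F (Set.Ico c 1) := by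
    apply strictAntiOn_of_deriv_neg (convex_Ico c 1)
      (hFcont.mono (Set.Ico_subset_Ico_left hc0.le))
    intro y hy
    rw [interior_Ico] at hy
    rw [(hderiv y ⟨hc0.trans hy.1, hy.2⟩).deriv]
    exact hGneg y hy
  have hFc : 0 < F c := by
    have := hmono (Set.left_mem_Icc.mpr hc0.le) (Set.right_mem_Icc.mpr hc0.le) hc0
    rwa [hF0] at this
  have hivt : (0:ℝ) ∈ Set.Ioo (F x) (F c) := ⟨hFx, hFc⟩
  obtain ⟨c', hc'mem, hc'0⟩ := intermediate_value_Ioo' hx.1.le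
    (hFcont.mono (fun y hy => ⟨hc0.le.trans hy.1, lt_of_le_of_lt hy.2 hx.2⟩)) hivt
  refine ⟨c', hc'mem, hc'0, ?_, ?_⟩
  · intro e he
    rcases le_or_gt e c with h | h
    · have := hmono (Set.left_mem_Icc.mpr hc0.le) ⟨he.1.le, h⟩ he.1
      rwa [hF0] at this
    · have := hanti ⟨h.le, (he.2.trans hc'mem.2).trans hx.2⟩
        ⟨hc'mem.1.le, hc'mem.2.trans hx.2⟩ he.2
      rw [hc'0] at this
      exact this
  · intro e he
    have := hanti ⟨hc'mem.1.le, hc'mem.2.trans hx.2⟩ ⟨(hc'mem.1.trans he.1).le, he.2⟩ he.1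
    rwa [hc'0] at this

/-! ### Numeric facts at the sample points -/

private lemma sqrt_e2_le : Real.sqrt (1 - (0.9529:ℝ)^2) ≤ 0.30329 :=
  Real.sqrt_le_iff.mpr ⟨by norm_num, by norm_num⟩

private lemma sqrt_e1_ge : (0.30359:ℝ) ≤ Real.sqrt (1 - (0.9528:ℝ)^2) :=
  (Real.le_sqrt (by norm_num) (by norm_num)).mpr (by norm_num)

private lemma e2_mem : (0.9529:ℝ) ∈ Set.Ioo (-1:ℝ) 1 := by constructor <;> norm_num

private lemma psiS_e2_neg : psiS 0.9529 < 0 := by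
  have hs := sqrt_pos' e2_mem
  have hsle := sqrt_e2_le
  have harc : Real.arcsin 0.9529 ≤ π/2 := Real.arcsin_le_pi_div_two _
  have hpi : π < 3.1416 := by have := Real.pi_lt_d6; linarith
  have hd0 : (0:ℝ) < (1 - (0.9529:ℝ)^2) * Real.sqrt (1 - (0.9529:ℝ)^2) := by
    apply mul_pos (by norm_num) hs
  have hkey : (6.2832:ℝ) < 0.9529 * (2 - (0.9529:ℝ)^2) /
      ((1 - (0.9529:ℝ)^2) * Real.sqrt (1 - (0.9529:ℝ)^2)) := by
    rw [lt_div_iff₀ hd0]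
    nlinarith [hsle, hs]
  have : psiS 0.9529 < 4 * (π/2) - 6.2832 := by
    unfold psiS
    have h4 : 4 * Real.arcsin 0.9529 ≤ 4 * (π/2) := by linarith
    linarith [hkey]
  linarith

private lemma phiS_e2_neg : phiS 0.9529 < 0 := by
  have hs := sqrt_pos' e2_mem
  have hsle := sqrt_e2_le
  have harc : Real.arcsin 0.9529 ≤ π/2 := Real.arcsin_le_pi_div_two _
  have harcpos : 0 < Real.arcsin 0.9529 := Real.arcsin_pos.mpr (by norm_num)
  have hpi : π < 3.1416 := by have := Real.pi_lt_d6; linarith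
  have h1 : (0.9529:ℝ) * (1 - 3*(0.9529:ℝ)^2) / Real.sqrt (1 - (0.9529:ℝ)^2)
      ≤ 0.9529 * (1 - 3*(0.9529:ℝ)^2) / 0.30329 := by
    rw [div_le_div_iff₀ hs (by norm_num)]
    nlinarith [hsle, hs]
  have h2 : -((1 - 4*(0.9529:ℝ)^2) * Real.arcsin 0.9529)
      ≤ (4*(0.9529:ℝ)^2 - 1) * (π/2) := by
    have : -((1 - 4*(0.9529:ℝ)^2) * Real.arcsin 0.9529)
        = (4*(0.9529:ℝ)^2 - 1) * Real.arcsin 0.9529 := by ring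
    rw [this]
    apply mul_le_mul_of_nonneg_left harc (by norm_num)
  unfold phiS
  nlinarith [h1, h2, hpi]

private lemma fS_e2_neg : fS 0.9529 < 0 := by
  have hsle := sqrt_e2_le
  have harc := arcsin_e2_gt
  unfold fS
  nlinarith [hsle, harc]

private lemma fS_e1_pos : 0 < fS 0.9528 := by
  have hsge := sqrt_e1_ge
  have harc := arcsin_e1_lt
  have harcpos : 0 < Real.arcsin 0.9528 := Real.arcsin_pos.mpr (by norm_num)
  unfold fS
  nlinarith [hsge, harc, harcpos]

/-! ### Main theorem -/

private lemma S2_eq {e : ℝ} (he : e ∈ Set.Ioo (0:ℝ) 1) :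
    S₂ e = (Real.sqrt (1 - e^2) / e^5) * fS e := by
  have hsq := sq_sqrt' (⟨by linarith [he.1], he.2⟩ : e ∈ Set.Ioo (-1:ℝ) 1)
  unfold S₂ fS
  set s := Real.sqrt (1 - e^2) with hsdef
  rw [← hsq]
  ring

theorem maclaurin_critical_eccentricity :
    ∃ e₀ ∈ Set.Ioo (0 : ℝ) 1, S₂ e₀ = 0 ∧
      (∀ e ∈ Set.Ioo (0 : ℝ) 1, e < e₀ → 0 < S₂ e) ∧
      (∀ e ∈ Set.Ioo (0 : ℝ) 1, e₀ < e → S₂ e < 0) ∧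
      0.9528 < e₀ ∧ e₀ < 0.9529 := by
  -- level 1 : ψ
  obtain ⟨a, haIoo, _, hψpos, hψneg⟩ := step_lemma psiS
    (fun e => (4*(1-e^2)^2 - (2+e^2)) / ((1-e^2)^2 * Real.sqrt (1-e^2)))
    (1/2) 0.9529 (by constructor <;> norm_num) psiS_zero psiS_cont
    (fun e he => hasDerivAt_psiS ⟨by linarith [he.1], he.2⟩)
    (fun e he => by
      have he' : e ∈ Set.Ioo (-1:ℝ) 1 := ⟨by linarith [he.1], by linarith [he.2]⟩
      have hu := one_sub_sq_pos he'
      have hs := sqrt_pos' he'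
      apply div_pos
      · have h1 : e^2 < 1/4 := by nlinarith [he.1, he.2]
        nlinarith [h1, sq_nonneg e]
      · exact mul_pos (pow_pos hu 2) hs)
    (fun e he => by
      have he' : e ∈ Set.Ioo (-1:ℝ) 1 := ⟨by linarith [he.1], he.2⟩
      have hu := one_sub_sq_pos he'
      have hs := sqrt_pos' he'
      apply div_neg_of_neg_of_pos
      · have h1 : 1/4 < e^2 := by nlinarith [he.1]
        have h2 : e^2 < 1 := by nlinarith [he.1, he.2]
        nlinarith [h1, h2]
      · exact mul_pos (pow_pos hu 2) hs)
    (by constructor <;> norm_num) psiS_e2_neg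
  have ha0 : (0:ℝ) < a := lt_trans (by norm_num) haIoo.1
  have ha1 : a < 1 := lt_trans haIoo.2 (by norm_num)
  -- level 2 : φ
  obtain ⟨b, hbIoo, _, hφpos, hφneg⟩ := step_lemma phiS
    (fun e => 2 * e * psiS e) a 0.9529 ⟨ha0, ha1⟩ phiS_zero phiS_cont
    (fun e he => hasDerivAt_phiS ⟨by linarith [he.1], he.2⟩)
    (fun e he => mul_pos (by linarith [he.1]) (hψpos e he))
    (fun e he => mul_neg_of_pos_of_neg (by linarith [ha0, he.1]) (hψneg e he))
    ⟨haIoo.2, by norm_num⟩ phiS_e2_neg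
  have hb0 : (0:ℝ) < b := lt_trans ha0 hbIoo.1
  have hb1 : b < 1 := lt_trans hbIoo.2 (by norm_num)
  -- level 3 : f
  obtain ⟨e₀, he₀Ioo, hfe₀, hfpos, hfneg⟩ := step_lemma fS
    (fun e => 4 * e * phiS e) b 0.9529 ⟨hb0, hb1⟩ fS_zero fS_cont
    (fun e he => hasDerivAt_fS ⟨by linarith [he.1], he.2⟩)
    (fun e he => mul_pos (by linarith [he.1]) (hφpos e he))
    (fun e he => mul_neg_of_pos_of_neg (by linarith [hb0, he.1]) (hφneg e he))
    ⟨hbIoo.2, by norm_num⟩ fS_e2_neg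
  have he₀0 : (0:ℝ) < e₀ := lt_trans hb0 he₀Ioo.1
  have he₀1 : e₀ < 1 := lt_trans he₀Ioo.2 (by norm_num)
  have hlo : (0.9528:ℝ) < e₀ := by
    by_contra h
    push_neg at h
    rcases eq_or_lt_of_le h with h' | h'
    · rw [h'] at hfe₀
      linarith [fS_e1_pos, hfe₀.symm.le]
    · have := hfneg 0.9528 ⟨h', by norm_num⟩
      linarith [fS_e1_pos]
  refine ⟨e₀, ⟨he₀0, he₀1⟩, ?_, ?_, ?_, hlo, he₀Ioo.2⟩
  · rw [S2_eq ⟨he₀0, he₀1⟩, hfe₀, mul_zero]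
  · intro e he hlt
    rw [S2_eq he]
    have hs := sqrt_pos' (⟨by linarith [he.1], he.2⟩ : e ∈ Set.Ioo (-1:ℝ) 1)
    exact mul_pos (div_pos hs (pow_pos he.1 5)) (hfpos e ⟨he.1, hlt⟩)
  · intro e he hlt
    rw [S2_eq he]
    have hs := sqrt_pos' (⟨by linarith [he.1], he.2⟩ : e ∈ Set.Ioo (-1:ℝ) 1)
    exact mul_neg_of_pos_of_neg (div_pos hs (pow_pos he.1 5)) (hfneg e ⟨hlt, he.2⟩)
end
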